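/- For all μ > 0, the derivative of ϑ_μ with respect to μ equals (1/(π μ (1+μ²))) log((1 + μ + √(1+μ²))/(1 − μ + √(1+μ²))), using the representation dϑ_μ/dμ = (1/(π(1+μ²))) ∫_0^∞ dr/(√(1+r²)(√(1+μ²)+√(1+r²))). -/

import Mathlib

set_option maxHeartbeats 2000000

open MeasureTheory Real Filter Topology

/-- Closed-form evaluation of the integral representation of `dϑ_μ/dμ`: for all `μ > 0`,
`(1/(π(1+μ²))) ∫_0^∞ dr/(√(1+r²)(√(1+μ²)+√(1+r²)))
  = (1/(π μ (1+μ²))) log((1+μ+√(1+μ²))/(1−μ+√(1+μ²)))`. -/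
theorem dtheta_closed_form (μ : ℝ) (hμ : 0 < μ) :
    (1 / (Real.pi * (1 + μ ^ 2))) *
        ∫ r in Set.Ioi (0 : ℝ),
          1 / (Real.sqrt (1 + r ^ 2) * (Real.sqrt (1 + μ ^ 2) + Real.sqrt (1 + r ^ 2)))
      = (1 / (Real.pi * μ * (1 + μ ^ 2))) *
          Real.log ((1 + μ + Real.sqrt (1 + μ ^ 2)) / (1 - μ + Real.sqrt (1 + μ ^ 2))) := by
  set a := Real.sqrt (1 + μ ^ 2) with ha
  have ha2 : a ^ 2 = 1 + μ ^ 2 := Real.sq_sqrt (by positivity)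
  have ha1 : 1 ≤ a := by
    have := Real.sqrt_le_sqrt (show (1:ℝ) ≤ 1 + μ ^ 2 by nlinarith)
    simpa [← ha] using this
  have haμ : μ < a := by nlinarith
  have hsfacts : ∀ x : ℝ, 1 ≤ Real.sqrt (1+x^2) ∧ Real.sqrt (1+x^2)^2 = 1+x^2
      ∧ x < Real.sqrt (1+x^2) := by
    intro x
    have h2 : Real.sqrt (1+x^2)^2 = 1+x^2 := Real.sq_sqrt (by positivity)
    have h1 : 1 ≤ Real.sqrt (1+x^2) := by
      have := Real.sqrt_le_sqrt (show (1:ℝ) ≤ 1 + x ^ 2 by nlinarith)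
      simpa using this
    refine ⟨h1, h2, ?_⟩
    nlinarith [Real.sqrt_nonneg (1+x^2)]
  set F : ℝ → ℝ := fun x =>
    (1/μ) * (Real.log ((a+1) * (1 + Real.sqrt (1+x^2)) + μ*x)
      - Real.log ((a+1) * (1 + Real.sqrt (1+x^2)) - μ*x)) with hF
  have hderiv : ∀ x ∈ Set.Ici (0:ℝ), HasDerivAt F
      (1 / (Real.sqrt (1 + x ^ 2) * (a + Real.sqrt (1 + x ^ 2)))) x := by
    intro x hx
    have hx : (0:ℝ) ≤ x := hx
    obtain ⟨hs1, hs2, hsx⟩ := hsfacts x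
    set s := Real.sqrt (1+x^2) with hsdef
    have hs0 : (0:ℝ) < s := by linarith
    have hN : 0 < (a+1) * (1 + s) + μ*x := by
      nlinarith [mul_nonneg hμ.le hx]
    have hD : 0 < (a+1) * (1 + s) - μ*x := by
      nlinarith [mul_pos hμ (show (0:ℝ) < s - x by linarith)]
    have hsd : HasDerivAt (fun y => Real.sqrt (1+y^2)) (x/s) x := by
      have hin : HasDerivAt (fun y : ℝ => 1 + y^2) (2*x) x := by
        simpa using ((hasDerivAt_pow 2 x).const_add 1)
      have := hin.sqrt (by positivity)
      convert this using 1
      rw [← hsdef]; field_simp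
    have hNd : HasDerivAt (fun y => (a+1) * (1 + Real.sqrt (1+y^2)) + μ*y)
        ((a+1) * (x/s) + μ) x := by
      have h1 := ((hsd.const_add 1).const_mul (a+1))
      have h2 := (hasDerivAt_id x).const_mul μ
      exact (h1.add h2).congr_deriv (by ring)
    have hDd : HasDerivAt (fun y => (a+1) * (1 + Real.sqrt (1+y^2)) - μ*y)
        ((a+1) * (x/s) - μ) x := by
      have h1 := ((hsd.const_add 1).const_mul (a+1))
      have h2 := (hasDerivAt_id x).const_mul μ
      exact (h1.sub h2).congr_deriv (by ring)
    have hlog := (hNd.log hN.ne').sub (hDd.log hD.ne')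
    have hmain : HasDerivAt F _ x := hlog.const_mul (1/μ)
    convert hmain using 1
    rw [← hsdef]
    rw [div_sub_div _ _ hN.ne' hD.ne']
    field_simp
    linear_combination (μ*(a^2-1) - 2*μ*(a+1)*(a+s)) * hs2 + (μ*x^2) * ha2
  have hnonneg : ∀ x ∈ Set.Ioi (0:ℝ),
      0 ≤ 1 / (Real.sqrt (1 + x ^ 2) * (a + Real.sqrt (1 + x ^ 2))) := by
    intro x _
    have h1 := (hsfacts x).1
    positivity
  have hL : Tendsto F atTop
      (𝓝 ((1/μ) * Real.log ((1 + μ + a) / (1 - μ + a)))) := by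
    have h1x : Tendsto (fun x : ℝ => 1/x) atTop (𝓝 0) := by
      simpa [one_div] using (tendsto_inv_atTop_zero : Tendsto (fun x : ℝ => x⁻¹) atTop (𝓝 0))
    have hq : Tendsto (fun x : ℝ => Real.sqrt (1+x^2) / x) atTop (𝓝 1) := by
      have h0 : Tendsto (fun x : ℝ => 1/x^2 + 1) atTop (𝓝 (0 + 1)) := by
        exact (tendsto_const_nhds.div_atTop (tendsto_pow_atTop two_ne_zero)).add
          tendsto_const_nhds
      have h1 : Tendsto (fun x : ℝ => Real.sqrt (1/x^2 + 1)) atTop (𝓝 1) := by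
        have := h0.sqrt
        simpa using this
      refine h1.congr' ?_
      filter_upwards [eventually_gt_atTop (0:ℝ)] with x hx
      rw [show 1/x^2 + 1 = (1 + x^2)/x^2 by field_simp]
      rw [Real.sqrt_div (by positivity) _, Real.sqrt_sq hx.le]
    have hnum : Tendsto (fun x : ℝ => (a+1) * (1/x + Real.sqrt (1+x^2)/x) + μ)
        atTop (𝓝 ((a+1) * (0 + 1) + μ)) :=
      (((h1x.add hq).const_mul (a+1)).add tendsto_const_nhds)
    have hden : Tendsto (fun x : ℝ => (a+1) * (1/x + Real.sqrt (1+x^2)/x) - μ)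
        atTop (𝓝 ((a+1) * (0 + 1) - μ)) :=
      (((h1x.add hq).const_mul (a+1)).sub tendsto_const_nhds)
    have hdnz : (a+1) * (0 + 1) - μ ≠ 0 := by nlinarith
    have hG := hnum.div hden hdnz
    have hGpos : 0 < ((a+1) * (0 + 1) + μ) / ((a+1) * (0 + 1) - μ) := by
      apply div_pos <;> nlinarith
    have hlog := (hG.log hGpos.ne').const_mul (1/μ)
    have heq : (1/μ) * Real.log (((a+1) * (0 + 1) + μ) / ((a+1) * (0 + 1) - μ))
        = (1/μ) * Real.log ((1 + μ + a) / (1 - μ + a)) := by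
      rw [show (a+1) * ((0:ℝ) + 1) + μ = 1 + μ + a by ring,
        show (a+1) * ((0:ℝ) + 1) - μ = 1 - μ + a by ring]
    rw [heq] at hlog
    refine hlog.congr' ?_
    filter_upwards [eventually_gt_atTop (0:ℝ)] with x hx
    obtain ⟨hs1, hs2, hsx⟩ := hsfacts x
    set s := Real.sqrt (1+x^2) with hsdef
    have hN : 0 < (a+1) * (1 + s) + μ*x := by nlinarith
    have hD : 0 < (a+1) * (1 + s) - μ*x := by
      nlinarith [mul_pos hμ (show (0:ℝ) < s - x by linarith)]
    have hdenval : (a+1) * (1/x + s/x) - μ = ((a+1) * (1 + s) - μ*x) / x := by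
      field_simp
    have hnumval : (a+1) * (1/x + s/x) + μ = ((a+1) * (1 + s) + μ*x) / x := by
      field_simp
    simp only [Pi.div_apply]
    rw [hnumval, hdenval, div_div_div_cancel_right₀ hx.ne',
      Real.log_div hN.ne' hD.ne']
  have key := integral_Ioi_of_hasDerivAt_of_nonneg' hderiv hnonneg hL
  have hF0 : F 0 = 0 := by
    simp [hF, Real.sqrt_one]
  rw [key, hF0, sub_zero]
  set L := Real.log ((1 + μ + a) / (1 - μ + a)) with hLdef
  have hπ := Real.pi_ne_zero
  have h1μ : (1:ℝ) + μ^2 ≠ 0 := by positivity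
  field_simp
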